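/- For every integer n ≥ 1, the sum over all diagonals d of the convex (n+3)-gon G_{n+3} of the binomial coefficient C(p(d), 2) equals (n+3)·C(n+3, 5), where p(d) is the number of diagonals crossing d. -/

import Mathlib

/-- A diagonal of the convex `N`-gon with vertices labelled `1, …, N` in cyclic order:
a pair `(i, j)` with `1 ≤ i`, `i + 2 ≤ j ≤ N`, excluding the side `(1, N)`. -/
def IsDiag (N : ℕ) (d : ℕ × ℕ) : Prop :=
  1 ≤ d.1 ∧ d.1 + 2 ≤ d.2 ∧ d.2 ≤ N ∧ ¬(d.1 = 1 ∧ d.2 = N)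

instance (N : ℕ) (d : ℕ × ℕ) : Decidable (IsDiag N d) := by
  unfold IsDiag; infer_instance

/-- Two diagonals of a convex polygon cross (intersect at an interior point). -/
def Crosses (d e : ℕ × ℕ) : Prop :=
  (d.1 < e.1 ∧ e.1 < d.2 ∧ d.2 < e.2) ∨ (e.1 < d.1 ∧ d.1 < e.2 ∧ e.2 < d.2)

instance (d e : ℕ × ℕ) : Decidable (Crosses d e) := by
  unfold Crosses; infer_instance

/-- The finite set of all diagonals of the convex `N`-gon. -/
def Diags (N : ℕ) : Finset (ℕ × ℕ) :=
  (Finset.range (N + 1) ×ˢ Finset.range (N + 1)).filter (IsDiag N)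

/-- `crossNum N d` is the number of diagonals of the convex `N`-gon crossing `d`
(the number `p(d)` of distinguished points on `d`). -/
def crossNum (N : ℕ) (d : ℕ × ℕ) : ℕ :=
  ((Diags N).filter (fun e => Crosses d e)).card

lemma crossNum_eq (N : ℕ) (d : ℕ × ℕ) (hd : IsDiag N d) :
    crossNum N d = (d.2 - d.1 - 1) * (N - 1 - (d.2 - d.1)) := by
  obtain ⟨i, j⟩ := d
  obtain ⟨h1, h2, h3, h4⟩ := hd
  simp only at h1 h2 h3 h4 ⊢
  unfold crossNum
  have hset : (Diags N).filter (fun e => Crosses (i, j) e) =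
      (Finset.Ioo i j ×ˢ Finset.Ioc j N) ∪ (Finset.Ico 1 i ×ˢ Finset.Ioo i j) := by
    ext ⟨a, b⟩
    simp only [Finset.mem_filter, Diags]
    simp only [Finset.mem_filter, Diags, Finset.mem_product, Finset.mem_range,
      Finset.mem_union, Finset.mem_Ioo, Finset.mem_Ioc, Finset.mem_Ico,
      IsDiag, Crosses]
    omega
  have hdisj : Disjoint (Finset.Ioo i j ×ˢ Finset.Ioc j N)
      (Finset.Ico 1 i ×ˢ Finset.Ioo i j) := by
    rw [Finset.disjoint_left]
    rintro ⟨a, b⟩ ha hb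
    simp only [Finset.mem_product, Finset.mem_Ioo, Finset.mem_Ioc, Finset.mem_Ico] at ha hb
    omega
  rw [hset, Finset.card_union_of_disjoint hdisj, Finset.card_product, Finset.card_product,
    Nat.card_Ioo, Nat.card_Ioc, Nat.card_Ico]
  have h5 : N - 1 - (j - i) = (N - j) + (i - 1) := by omega
  rw [h5, Nat.mul_add, Nat.mul_comm (i - 1)]

lemma fiber_card (N k : ℕ) (hk : 2 ≤ k) (hk2 : k ≤ N - 2) (h4 : 4 ≤ N) :
    ((Diags N).filter (fun d => d.2 - d.1 = k)).card = N - k := by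
  have hset : (Diags N).filter (fun d => d.2 - d.1 = k) =
      Finset.image (fun i => (i, i + k)) (Finset.Icc 1 (N - k)) := by
    ext ⟨a, b⟩
    simp only [Finset.mem_filter, Diags, Finset.mem_product, Finset.mem_range,
      Finset.mem_image, Finset.mem_Icc, IsDiag, Prod.mk.injEq]
    constructor
    · rintro ⟨⟨⟨ha, hb⟩, h1, h2, h3, h5⟩, h6⟩
      exact ⟨a, ⟨h1, by omega⟩, rfl, by omega⟩
    · rintro ⟨i, ⟨hi1, hi2⟩, rfl, rfl⟩
      refine ⟨⟨⟨by omega, by omega⟩, by omega, by omega, by omega, ?_⟩, by omega⟩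
      rintro ⟨rfl, h⟩
      omega
  have hinj : Function.Injective (fun i : ℕ => (i, i + k)) := by
    intro a b h
    exact (Prod.ext_iff.mp h).1
  rw [hset, Finset.card_image_of_injective _ hinj, Nat.card_Icc]
  omega

lemma sumG (x : ℚ) (m : ℕ) :
    ∑ k ∈ Finset.range m,
      (x - (k : ℚ) - 2) * (((k : ℚ) + 1) * (x - 3 - (k : ℚ)))
        * (((k : ℚ) + 1) * (x - 3 - (k : ℚ)) - 1) / 2
    = ((m : ℚ) * (-120 + 184 * x - 80 * x ^ 2 + 10 * x ^ 3)
        + (m : ℚ) ^ 2 * (-400 + 540 * x - 225 * x ^ 2 + 30 * x ^ 3)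
        + (m : ℚ) ^ 3 * (-510 + 560 * x - 190 * x ^ 2 + 20 * x ^ 3)
        + (m : ℚ) ^ 4 * (-310 + 240 * x - 45 * x ^ 2)
        + (m : ℚ) ^ 5 * (-90 + 36 * x)
        + (m : ℚ) ^ 6 * (-10)) / 120 := by
  induction m with
  | zero => simp
  | succ m ih =>
    rw [Finset.sum_range_succ, ih]
    push_cast
    ring

lemma choose_five_cast (N : ℕ) (h4 : 4 ≤ N) :
    (Nat.choose N 5 : ℚ)
      = (N : ℚ) * ((N : ℚ) - 1) * ((N : ℚ) - 2) * ((N : ℚ) - 3) * ((N : ℚ) - 4) / 120 := by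
  have h : N.descFactorial 5 = 120 * N.choose 5 := by
    rw [Nat.descFactorial_eq_factorial_mul_choose]
    norm_num [Nat.factorial]
  have h2 : N.descFactorial 5 = N * (N - 1) * (N - 2) * (N - 3) * (N - 4) := by
    simp [Nat.descFactorial_succ, Nat.descFactorial_zero]
    ring
  have h3 : (120 : ℚ) * N.choose 5
      = (N : ℚ) * ((N : ℚ) - 1) * ((N : ℚ) - 2) * ((N : ℚ) - 3) * ((N : ℚ) - 4) := by
    have := congrArg (fun t : ℕ => (t : ℚ)) (h.symm.trans h2)
    push_cast [Nat.cast_sub (by omega : 1 ≤ N), Nat.cast_sub (by omega : 2 ≤ N),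
      Nat.cast_sub (by omega : 3 ≤ N), Nat.cast_sub (by omega : 4 ≤ N)] at this
    linarith
  linarith

lemma key_sum (N : ℕ) (h4 : 4 ≤ N) :
    ∑ k ∈ Finset.Icc 2 (N - 2), (N - k) * Nat.choose ((k - 1) * (N - 1 - k)) 2
      = N * Nat.choose N 5 := by
  have hcast : ((∑ k ∈ Finset.Icc 2 (N - 2),
      (N - k) * Nat.choose ((k - 1) * (N - 1 - k)) 2 : ℕ) : ℚ)
      = ((N * Nat.choose N 5 : ℕ) : ℚ) := by
    push_cast
    have step1 : ∑ k ∈ Finset.Icc 2 (N - 2),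
        ((N - k : ℕ) : ℚ) * (Nat.choose ((k - 1) * (N - 1 - k)) 2 : ℚ)
        = ∑ k ∈ Finset.Icc 2 (N - 2),
          ((N : ℚ) - k) * (((k : ℚ) - 1) * ((N : ℚ) - 1 - k))
            * ((((k : ℚ) - 1) * ((N : ℚ) - 1 - k)) - 1) / 2 := by
      refine Finset.sum_congr rfl fun k hk => ?_
      rw [Finset.mem_Icc] at hk
      obtain ⟨hk1, hk2⟩ := hk
      rw [Nat.cast_choose_two]
      push_cast [Nat.cast_sub (by omega : k ≤ N), Nat.cast_sub (by omega : 1 ≤ k),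
        Nat.cast_sub (by omega : k ≤ N - 1), Nat.cast_sub (by omega : 1 ≤ N)]
      ring
    rw [step1]
    have hIcc : Finset.Icc 2 (N - 2) = Finset.Ico 2 (N - 1) := by
      have h : N - 1 = (N - 2) + 1 := by omega
      rw [h, Finset.Ico_add_one_right_eq_Icc]
    rw [hIcc, Finset.sum_Ico_eq_sum_range]
    have hm : N - 1 - 2 = N - 3 := by omega
    rw [hm]
    have step2 : ∑ k ∈ Finset.range (N - 3),
        ((N : ℚ) - (2 + k : ℕ)) * ((((2 + k : ℕ) : ℚ) - 1) * ((N : ℚ) - 1 - (2 + k : ℕ)))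
          * (((((2 + k : ℕ) : ℚ) - 1) * ((N : ℚ) - 1 - (2 + k : ℕ))) - 1) / 2
        = ∑ k ∈ Finset.range (N - 3),
          ((N : ℚ) - (k : ℚ) - 2) * (((k : ℚ) + 1) * ((N : ℚ) - 3 - (k : ℚ)))
            * (((k : ℚ) + 1) * ((N : ℚ) - 3 - (k : ℚ)) - 1) / 2 := by
      refine Finset.sum_congr rfl fun k _ => ?_
      push_cast
      ring
    rw [step2, sumG]
    rw [choose_five_cast N h4]
    have hN3 : ((N - 3 : ℕ) : ℚ) = (N : ℚ) - 3 := by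
      push_cast [Nat.cast_sub (by omega : 3 ≤ N)]
      ring
    rw [hN3]
    ring
  exact_mod_cast hcast

/-- The finite set of all diagonals of the convex `N`-gon. -/
theorem Diags_def (N : ℕ) : Diags N =
  (Finset.range (N + 1) ×ˢ Finset.range (N + 1)).filter (IsDiag N) := rfl

/-- For every `n ≥ 1`, the number of distinguished segments of the convex `(n+3)`-gon,
`S_{n+3} = Σ_d C(p(d), 2)`, equals `(n+3)·C(n+3, 5)`. -/
theorem distinguished_segments_count (n : ℕ) (hn : 1 ≤ n) :
    ∑ d ∈ Diags (n + 3), Nat.choose (crossNum (n + 3) d) 2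
      = (n + 3) * Nat.choose (n + 3) 5 := by
  set N := n + 3 with hN
  have h4 : 4 ≤ N := by omega
  have hmaps : ∀ d ∈ Diags N, d.2 - d.1 ∈ Finset.Icc 2 (N - 2) := by
    intro d hd
    simp only [Diags, Finset.mem_filter, Finset.mem_product, Finset.mem_range] at hd
    obtain ⟨⟨ha, hb⟩, h1, h2, h3, h5⟩ := hd
    rw [Finset.mem_Icc]
    omega
  rw [← Finset.sum_fiberwise_of_maps_to hmaps]
  rw [← key_sum N h4]
  refine Finset.sum_congr rfl fun k hk => ?_
  rw [Finset.mem_Icc] at hk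
  have hconst : ∀ d ∈ (Diags N).filter (fun d => d.2 - d.1 = k),
      Nat.choose (crossNum N d) 2 = Nat.choose ((k - 1) * (N - 1 - k)) 2 := by
    intro d hd
    rw [Finset.mem_filter] at hd
    obtain ⟨hd1, hd2⟩ := hd
    have hdiag : IsDiag N d := by
      simp only [Diags, Finset.mem_filter] at hd1
      exact hd1.2
    rw [crossNum_eq N d hdiag, hd2]
  rw [Finset.sum_congr rfl hconst, Finset.sum_const, fiber_card N k hk.1 hk.2 h4,
    smul_eq_mul]
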